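/- Let p > 2 be a prime, let k = p^r·k' with r ≥ 1 maximal (so gcd(k', p) = 1), and suppose k is odd. Then Φ_k(u) ≡ Φ_{k'}(u)^{p^r} · (u - 2)^{(p^r - 1)/2} mod p, as polynomials in 𝔽_p[u]. -/

import Mathlib

open Polynomial

noncomputable def Ht (Φ : Polynomial ℤ) : Polynomial ℤ :=
  Φ.sum fun j a => C a * (X ^ 2 + 1) ^ j * X ^ (Φ.natDegree - j)

lemma ht_eval {R : Type*} [CommRing R] (χ : ℤ →+* R) (Φ : Polynomial ℤ) (μ ν : R)
    (hμ : μ * ν = 1) :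
    eval₂ χ μ (Ht Φ) = μ ^ Φ.natDegree * eval₂ χ (μ + ν) Φ := by
  rw [Ht, Polynomial.sum_def, Polynomial.eval₂_finset_sum,
    Polynomial.eval₂_eq_sum, Polynomial.sum_def, Finset.mul_sum]
  refine Finset.sum_congr rfl fun j hj => ?_
  have hjd : j ≤ Φ.natDegree := Polynomial.le_natDegree_of_mem_supp j hj
  have h1 : (μ ^ 2 + 1 : R) = μ * (μ + ν) := by rw [mul_add, ← hμ]; ring
  simp only [eval₂_mul, eval₂_C, eval₂_pow, eval₂_X, eval₂_add, eval₂_one]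
  rw [h1, mul_pow]
  have h2 : μ ^ j * μ ^ (Φ.natDegree - j) = μ ^ Φ.natDegree := by
    rw [← pow_add, Nat.add_sub_cancel' hjd]
  calc χ (Φ.coeff j) * (μ ^ j * (μ + ν) ^ j) * μ ^ (Φ.natDegree - j)
      = (μ ^ j * μ ^ (Φ.natDegree - j)) * (χ (Φ.coeff j) * (μ + ν) ^ j) := by ring
    _ = μ ^ Φ.natDegree * (χ (Φ.coeff j) * (μ + ν) ^ j) := by rw [h2]

lemma step_int (k m : ℕ) (hk : k = 2 * m + 1) (Φ : Polynomial ℤ)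
    (hΦ : ∀ l : ℂ, l ≠ 0 →
      (Polynomial.aeval (l + l⁻¹)) Φ * (l - 1) = (l ^ k - 1) * l ^ ((1 - (k : ℤ)) / 2)) :
    Ht Φ * ((X - 1) * X ^ m) = (X ^ k - 1) * X ^ Φ.natDegree := by
  apply Polynomial.map_injective (Int.castRingHom ℂ) Int.cast_injective
  apply Polynomial.eq_of_infinite_eval_eq
  apply Set.Infinite.mono (s := {(0:ℂ)}ᶜ)
  · intro l hl
    have hl0 : l ≠ 0 := hl
    have hexp : ((1 - (k : ℤ)) / 2) = -(m : ℤ) := by omega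
    have hinv : l * l⁻¹ = 1 := mul_inv_cancel₀ hl0
    have key := hΦ l hl0
    rw [hexp, zpow_neg, zpow_natCast] at key
    have haev : (Polynomial.aeval (l + l⁻¹)) Φ = eval₂ (Int.castRingHom ℂ) (l + l⁻¹) Φ := by
      rw [Polynomial.aeval_def, algebraMap_int_eq]
    rw [haev] at key
    show eval l _ = eval l _
    simp only [Polynomial.map_mul, Polynomial.map_sub, Polynomial.map_pow, Polynomial.map_one,
      Polynomial.map_X, eval_mul, eval_sub, eval_pow, eval_one, eval_X, Set.mem_setOf_eq]
    rw [Polynomial.eval_map, ht_eval (Int.castRingHom ℂ) Φ l l⁻¹ hinv]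
    have hlm : (l : ℂ) ^ m ≠ 0 := pow_ne_zero _ hl0
    calc l ^ Φ.natDegree * eval₂ (Int.castRingHom ℂ) (l + l⁻¹) Φ * ((l - 1) * l ^ m)
        = (eval₂ (Int.castRingHom ℂ) (l + l⁻¹) Φ * (l - 1)) * (l ^ Φ.natDegree * l ^ m) := by ring
      _ = ((l ^ k - 1) * (l ^ m)⁻¹) * (l ^ Φ.natDegree * l ^ m) := by rw [key]
      _ = (l ^ k - 1) * l ^ Φ.natDegree * ((l ^ m)⁻¹ * l ^ m) := by ring
      _ = (l ^ k - 1) * l ^ Φ.natDegree := by rw [inv_mul_cancel₀ hlm, mul_one]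
  · exact Set.Finite.infinite_compl (Set.finite_singleton 0)

lemma phi_at_two (k m : ℕ) (Φ : Polynomial ℤ)
    (hA : Ht Φ * ((X - 1) * X ^ m) = (X ^ k - 1) * X ^ Φ.natDegree) :
    Φ.eval 2 = k := by
  have h1 : eval 1 (Ht Φ) = eval 2 Φ := by
    have := ht_eval (RingHom.id ℤ) Φ 1 1 (by ring)
    simpa [Polynomial.eval₂_at_apply, eval₂_eq_eval_map, Polynomial.map_id] using this
  have hd := congrArg Polynomial.derivative hA
  have he := congrArg (Polynomial.eval 1) hd
  simp only [derivative_mul, derivative_pow, derivative_sub, derivative_one, derivative_X,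
    derivative_X_pow, eval_mul, eval_add, eval_sub, eval_pow, eval_one, eval_X, eval_natCast,
    eval_mul, one_pow, mul_one, sub_self, mul_zero, zero_mul, add_zero, zero_add, eval_C] at he
  rw [h1] at he
  simpa using he

/-- Let `p > 2` be prime, `k = p^r·k'` with `r ≥ 1` and `gcd(k',p) = 1`, `k` odd. Then
`Φₖ(u) ≡ Φₖ'(u)^{p^r}·(u-2)^{(p^r-1)/2} (mod p)` in `𝔽ₚ[u]`. -/
theorem stmt6 (p : ℕ) (hp : p.Prime) (hp2 : 2 < p) (r k' k : ℕ) (hr : 1 ≤ r)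
    (hcop : Nat.Coprime k' p) (hk : k = p ^ r * k') (hkodd : Odd k)
    (Φk Φk' : Polynomial ℤ)
    (hΦk : ∀ l : ℂ, l ≠ 0 →
      (Polynomial.aeval (l + l⁻¹)) Φk * (l - 1) = (l ^ k - 1) * l ^ ((1 - (k : ℤ)) / 2))
    (hΦk' : ∀ l : ℂ, l ≠ 0 →
      (Polynomial.aeval (l + l⁻¹)) Φk' * (l - 1) = (l ^ k' - 1) * l ^ ((1 - (k' : ℤ)) / 2)) :
    Φk.map (Int.castRingHom (ZMod p)) =
      (Φk'.map (Int.castRingHom (ZMod p))) ^ (p ^ r) * (X - 2) ^ ((p ^ r - 1) / 2) := by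
  haveI : Fact p.Prime := ⟨hp⟩
  set q := p ^ r with hq
  have hqodd : Odd q := (hp.odd_of_ne_two (by omega)).pow
  have hk'odd : Odd k' := (Nat.odd_mul.mp (hk ▸ hkodd)).2
  obtain ⟨s, hs⟩ := hqodd
  obtain ⟨m', hm'⟩ := hk'odd
  have hkm : k = 2 * (2 * s * m' + s + m') + 1 := by rw [hk, hs, hm']; ring
  set m := 2 * s * m' + s + m' with hm
  have hq3 : 3 ≤ q := by
    calc 3 ≤ p := hp2
    _ = p ^ 1 := (pow_one p).symm
    _ ≤ p ^ r := Nat.pow_le_pow_right (by omega) hr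
  have hs1 : 1 ≤ s := by omega
  have hpk : p ∣ k := hk ▸ Dvd.dvd.mul_right (dvd_pow_self p (by omega)) k'
  have hAk := step_int k m hkm Φk hΦk
  have hAk' := step_int k' m' hm' Φk' hΦk'
  -- move to the algebraic closure
  let F := AlgebraicClosure (ZMod p)
  let σ : ZMod p →+* F := algebraMap (ZMod p) F
  let χ : ℤ →+* F := Int.castRingHom F
  have hcomp : σ.comp (Int.castRingHom (ZMod p)) = χ := RingHom.ext_int _ _
  have hsq : (q - 1) / 2 = s := by omega
  rw [hsq]
  refine Polynomial.map_injective σ σ.injective ?_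
  rw [Polynomial.map_mul, Polynomial.map_pow, Polynomial.map_map, Polynomial.map_map, hcomp,
    Polynomial.map_pow, Polynomial.map_sub, Polynomial.map_X, Polynomial.map_ofNat]
  apply Polynomial.funext
  intro c
  obtain ⟨μ, hμroot⟩ := IsAlgClosed.exists_root (C 1 * X ^ 2 + C (-c) * X + C 1) (by
    rw [Polynomial.degree_quadratic (by norm_num : (1 : F) ≠ 0)]; norm_num)
  have hμeq : μ ^ 2 - c * μ + 1 = 0 := by
    have h := hμroot
    simp only [Polynomial.IsRoot, eval_add, eval_mul, eval_pow, eval_C, eval_X, eval_neg] at h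
    linear_combination h
  have hμ0 : μ ≠ 0 := by
    intro h; rw [h] at hμeq; norm_num at hμeq
  have hc : c = μ + μ⁻¹ := by
    linear_combination (-μ⁻¹) * hμeq + (μ - c) * (mul_inv_cancel₀ hμ0)
  have hμinv : μ * μ⁻¹ = 1 := mul_inv_cancel₀ hμ0
  -- evaluation identity for a generic Φ
  have keyeval : ∀ (Φ : Polynomial ℤ) (kk mm : ℕ),
      Ht Φ * ((X - 1) * X ^ mm) = (X ^ kk - 1) * X ^ Φ.natDegree →
      eval c (Φ.map χ) * ((μ - 1) * μ ^ mm) = μ ^ kk - 1 := by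
    intro Φ kk mm hA
    have h := congrArg (eval₂ χ μ) hA
    rw [eval₂_mul, eval₂_mul, eval₂_mul, eval₂_sub, eval₂_sub, eval₂_pow, eval₂_pow, eval₂_pow,
      eval₂_X, eval₂_one, ht_eval χ Φ μ μ⁻¹ hμinv, ← hc] at h
    have hdk : (μ : F) ^ Φ.natDegree ≠ 0 := pow_ne_zero _ hμ0
    apply mul_right_cancel₀ hdk
    rw [Polynomial.eval_map]
    linear_combination h
  have e1 := keyeval Φk k m hAk
  have e2 := keyeval Φk' k' m' hAk'
  rw [eval_mul, eval_pow, eval_pow, eval_sub, eval_X, eval_ofNat]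
  have frob : (μ ^ k' - 1) ^ q = μ ^ k - 1 := by
    rw [hq, sub_pow_char_pow, one_pow, ← pow_mul, mul_comm k' (p ^ r), ← hq, ← hk]
  by_cases hμ1 : μ = 1
  · -- then c = 2
    have hc2 : c = 2 := by rw [hc, hμ1]; norm_num
    rw [hc2]
    have lhs0 : eval 2 (Φk.map χ) = 0 := by
      rw [Polynomial.eval_map, show (2 : F) = χ 2 from by simp [χ], Polynomial.eval₂_at_apply,
        phi_at_two k m Φk hAk]
      have : ((k : ℤ) : F) = ((k : ℕ) : F) := by push_cast; ring
      simp only [χ, eq_intCast] at *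
      rw [this, CharP.cast_eq_zero_iff F p k]
      exact hpk
    rw [lhs0, sub_self, zero_pow (by omega : s ≠ 0), mul_zero]
  · have hne : (μ - 1) * μ ^ m ≠ 0 := mul_ne_zero (sub_ne_zero.mpr hμ1) (pow_ne_zero _ hμ0)
    apply mul_right_cancel₀ hne
    rw [e1, ← frob, ← e2]
    have hc2 : c - 2 = (μ - 1) ^ 2 * μ⁻¹ := by
      rw [hc]
      linear_combination (2 - μ) * hμinv
    rw [hc2]
    have hmm : m = m' * q + s := by rw [hm, hs]; ring
    have hinvs : (μ⁻¹) ^ s * μ ^ s = 1 := by rw [← mul_pow, inv_mul_cancel₀ hμ0, one_pow]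
    rw [hmm, hs]
    set E := eval c (map χ Φk') with hE
    rw [mul_pow E ((μ - 1) * μ ^ m'), mul_pow (μ - 1) (μ ^ m'), ← pow_mul μ m' (2 * s + 1),
      mul_pow ((μ - 1) ^ 2) μ⁻¹, ← pow_mul (μ - 1) 2 s, pow_add μ (m' * (2 * s + 1)) s]
    linear_combination (-(E ^ (2 * s + 1) * (μ - 1) ^ (2 * s + 1) * μ ^ (m' * (2 * s + 1)))) * hinvs
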